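/- Let M be a Γ-semiring and A a nonempty subset of M. Then A ∪ AΓMΓA is the smallest generalized bi-Γ-ideal of M containing A; i.e., it is a generalized bi-Γ-ideal containing A, and it is contained in every generalized bi-Γ-ideal of M containing A. -/
import Mathlib


/-- A Γ-semiring: additive commutative semigroups `M` and `G` with a triple
product `M → G → M → M` satisfying distributivity and associativity laws. -/
structure GammaSemiring (M G : Type*) [AddCommSemigroup M] [AddCommSemigroup G] where
  tmul : M → G → M → M
  left_distrib : ∀ a γ b c, tmul a γ (b + c) = tmul a γ b + tmul a γ c
  right_distrib : ∀ a b γ c, tmul (a + b) γ c = tmul a γ c + tmul b γ c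
  gamma_distrib : ∀ a γ δ b, tmul a (γ + δ) b = tmul a γ b + tmul a δ b
  mul_assoc : ∀ a γ b δ c, tmul (tmul a γ b) δ c = tmul a γ (tmul b δ c)

namespace GammaSemiring

variable {M G : Type*} [AddCommSemigroup M] [AddCommSemigroup G]

/-- `AΓB`: the set of all finite (nonempty) sums `Σᵢ aᵢγᵢbᵢ` with `aᵢ ∈ A`,
`γᵢ ∈ Γ`, `bᵢ ∈ B`, realized as the additive subsemigroup closure of the set
of single products. -/
def sprod (gs : GammaSemiring M G) (A B : Set M) : Set M :=
  (AddSubsemigroup.closure {x | ∃ a ∈ A, ∃ γ : G, ∃ b ∈ B, x = gs.tmul a γ b} :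
    AddSubsemigroup M)

/-- A generalized bi-Γ-ideal of `M`: a nonempty subset `A` with `AΓMΓA ⊆ A`. -/
def IsGenBiIdeal (gs : GammaSemiring M G) (A : Set M) : Prop :=
  A.Nonempty ∧ gs.sprod (gs.sprod A Set.univ) A ⊆ A

/-- A sub-Γ-semiring: nonempty, closed under addition and the Γ-product. -/
def IsSubGammaSemiring (gs : GammaSemiring M G) (T : Set M) : Prop :=
  T.Nonempty ∧ (∀ a ∈ T, ∀ b ∈ T, a + b ∈ T) ∧
    ∀ a ∈ T, ∀ γ : G, ∀ b ∈ T, gs.tmul a γ b ∈ T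

/-- A generalized bi-Γ-ideal of the Γ-semiring `T` (a subset of `M`):
a nonempty subset `A ⊆ T` with `AΓTΓA ⊆ A`. -/
def IsGenBiIdealIn (gs : GammaSemiring M G) (T A : Set M) : Prop :=
  A.Nonempty ∧ A ⊆ T ∧ gs.sprod (gs.sprod A T) A ⊆ A

/-- A Γ-ideal of `M`. -/
def IsGammaIdeal (gs : GammaSemiring M G) (A : Set M) : Prop :=
  A.Nonempty ∧ (∀ a ∈ A, ∀ b ∈ A, a + b ∈ A) ∧
    ∀ a ∈ A, ∀ γ : G, ∀ x : M, gs.tmul x γ a ∈ A ∧ gs.tmul a γ x ∈ A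

/-- A quasi-Γ-ideal of `M`: a sub-Γ-semiring `A` with `AΓM ∩ MΓA ⊆ A`. -/
def IsQuasiGammaIdeal (gs : GammaSemiring M G) (A : Set M) : Prop :=
  gs.IsSubGammaSemiring A ∧ gs.sprod A Set.univ ∩ gs.sprod Set.univ A ⊆ A

/-- A bi-Γ-ideal of `M`: a sub-Γ-semiring `A` with `AΓMΓA ⊆ A`. -/
def IsBiIdeal (gs : GammaSemiring M G) (A : Set M) : Prop :=
  gs.IsSubGammaSemiring A ∧ gs.sprod (gs.sprod A Set.univ) A ⊆ A

/-- `M` is GB-simple: `M` is its unique generalized bi-Γ-ideal. -/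
def GBSimple (gs : GammaSemiring M G) : Prop :=
  ∀ A : Set M, gs.IsGenBiIdeal A → A = Set.univ

/-- The sub-Γ-semiring `T`, regarded as a Γ-semiring, is GB-simple. -/
def GBSimpleIn (gs : GammaSemiring M G) (T : Set M) : Prop :=
  ∀ A : Set M, gs.IsGenBiIdealIn T A → A = T

end GammaSemiring

open GammaSemiring

variable {M G : Type*} [AddCommSemigroup M] [AddCommSemigroup G]


namespace GammaSemiring
variable {M G : Type*} [AddCommSemigroup M] [AddCommSemigroup G]
variable (gs : GammaSemiring M G)

lemma tmul_mem_sprod {A B : Set M} {a b : M} (ha : a ∈ A) (γ : G) (hb : b ∈ B) :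
    gs.tmul a γ b ∈ gs.sprod A B :=
  AddSubsemigroup.subset_closure ⟨a, ha, γ, b, hb, rfl⟩

lemma add_mem_sprod {A B : Set M} {x y : M} (hx : x ∈ gs.sprod A B) (hy : y ∈ gs.sprod A B) :
    x + y ∈ gs.sprod A B := AddSubsemigroup.add_mem _ hx hy

lemma sprod_le {A B : Set M} {T : AddSubsemigroup M}
    (h : ∀ a ∈ A, ∀ γ : G, ∀ b ∈ B, gs.tmul a γ b ∈ T) : gs.sprod A B ⊆ T := by
  intro x hx
  refine AddSubsemigroup.closure_le.2 ?_ hx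
  rintro z ⟨a, ha, γ, b, hb, rfl⟩
  exact h a ha γ b hb

lemma sprod_induction {A B : Set M} {p : M → Prop} {x : M} (hx : x ∈ gs.sprod A B)
    (mem : ∀ a ∈ A, ∀ γ : G, ∀ b ∈ B, p (gs.tmul a γ b))
    (add : ∀ x y, p x → p y → p (x + y)) : p x := by
  refine AddSubsemigroup.closure_induction (p := fun z _ => p z) ?_
    (fun x y _ _ hx hy => add x y hx hy) hx
  rintro z ⟨a, ha, γ, b, hb, rfl⟩
  exact mem a ha γ b hb

lemma sprod_mono {A A' B B' : Set M} (hA : A ⊆ A') (hB : B ⊆ B') :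
    gs.sprod A B ⊆ gs.sprod A' B' :=
  gs.sprod_le fun a ha γ b hb => gs.tmul_mem_sprod (hA ha) γ (hB hb)

lemma sprod_assoc_le {A B C : Set M} :
    gs.sprod (gs.sprod A B) C ⊆ gs.sprod A (gs.sprod B C) := by
  refine gs.sprod_le fun x hx γ c hc => ?_
  refine gs.sprod_induction hx (p := fun x => gs.tmul x γ c ∈ _) ?_ ?_
  · intro a ha δ b hb
    rw [gs.mul_assoc]
    exact gs.tmul_mem_sprod ha δ (gs.tmul_mem_sprod hb γ hc)
  · intro x y hx hy
    rw [gs.right_distrib]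
    exact gs.add_mem_sprod hx hy

lemma sprod_assoc_ge {A B C : Set M} :
    gs.sprod A (gs.sprod B C) ⊆ gs.sprod (gs.sprod A B) C := by
  refine gs.sprod_le fun a ha γ x hx => ?_
  refine gs.sprod_induction hx (p := fun x => gs.tmul a γ x ∈ _) ?_ ?_
  · intro b hb δ c hc
    rw [← gs.mul_assoc]
    exact gs.tmul_mem_sprod (gs.tmul_mem_sprod ha γ hb) δ hc
  · intro x y hx hy
    rw [gs.left_distrib]
    exact gs.add_mem_sprod hx hy

end GammaSemiring

lemma sprod_le' (gs : GammaSemiring M G) {A B C D : Set M}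
    (h : ∀ a ∈ A, ∀ γ : G, ∀ b ∈ B, gs.tmul a γ b ∈ gs.sprod C D) :
    gs.sprod A B ⊆ gs.sprod C D := gs.sprod_le h

theorem stmt3 (gs : GammaSemiring M G) (A : Set M) (hA : A.Nonempty) :
    gs.IsGenBiIdeal (A ∪ gs.sprod (gs.sprod A Set.univ) A) ∧
    A ⊆ A ∪ gs.sprod (gs.sprod A Set.univ) A ∧
    ∀ C : Set M, gs.IsGenBiIdeal C → A ⊆ C →
      A ∪ gs.sprod (gs.sprod A Set.univ) A ⊆ C := by
  set K : Set M := gs.sprod A Set.univ with hK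
  set B : Set M := gs.sprod K A with hB
  have hKK : gs.sprod K K ⊆ K :=
    gs.sprod_assoc_le.trans (gs.sprod_mono subset_rfl (Set.subset_univ _))
  have hBu : gs.sprod B Set.univ ⊆ K :=
    gs.sprod_assoc_le.trans ((gs.sprod_mono subset_rfl subset_rfl).trans hKK)
  have hKB : gs.sprod K B ⊆ B :=
    gs.sprod_assoc_ge.trans (gs.sprod_mono hKK subset_rfl)
  have h1 : gs.sprod (A ∪ B) Set.univ ⊆ K := by
    refine sprod_le' gs ?_
    rintro x (hx | hx) γ m _
    · exact gs.tmul_mem_sprod hx γ (Set.mem_univ m)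
    · exact hBu (gs.tmul_mem_sprod hx γ (Set.mem_univ m))
  have h2 : gs.sprod K (A ∪ B) ⊆ B := by
    refine sprod_le' gs ?_
    rintro x hx γ y (hy | hy)
    · exact gs.tmul_mem_sprod hx γ hy
    · exact hKB (gs.tmul_mem_sprod hx γ hy)
  have main : gs.sprod (gs.sprod (A ∪ B) Set.univ) (A ∪ B) ⊆ A ∪ B :=
    ((gs.sprod_mono h1 subset_rfl).trans h2).trans Set.subset_union_right
  refine ⟨⟨hA.mono Set.subset_union_left, main⟩, Set.subset_union_left, ?_⟩
  rintro C ⟨_, hC2⟩ hAC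
  refine Set.union_subset hAC ?_
  exact (gs.sprod_mono (gs.sprod_mono hAC subset_rfl) hAC).trans hC2
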